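/- Let P be a squarefree positive integer and T a finite subset of ℤ/Pℤ. Then the cardinality of the core C(T, U(P), P) = {x ∈ ℤ/Pℤ : ∀ t ∈ T, x + t is a unit of ℤ/Pℤ} equals the product over all primes p dividing P of (p − |T mod p|), where T mod p denotes the image of T under the natural projection ℤ/Pℤ → ℤ/pℤ. -/

import Mathlib

theorem core_card_squarefree (P : ℕ) (hP : 0 < P) (hsf : Squarefree P)
    (T : Finset (ZMod P)) :
    Nat.card {x : ZMod P // ∀ t ∈ T, IsUnit (x + t)} =
      ∏ p ∈ P.primeFactors,
        (p - (T.image (fun t : ZMod P => ((t.val : ℕ) : ZMod p))).card) := by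
  haveI : NeZero P := ⟨hP.ne'⟩
  set ι := {p // p ∈ P.primeFactors} with hι
  set a : ι → ℕ := fun p => (p : ℕ) with ha
  have hprime : ∀ i : ι, Nat.Prime (a i) := fun i => Nat.prime_of_mem_primeFactors i.2
  have hcop : Pairwise (Function.onFun Nat.Coprime a) := by
    intro i j h
    exact (Nat.coprime_primes (hprime i) (hprime j)).mpr
      (fun hc => h (Subtype.ext hc))
  have hprod : ∏ i : ι, a i = P :=
    (Finset.prod_coe_sort P.primeFactors (fun p => p)).trans
      (Nat.prod_primeFactors_of_squarefree hsf)
  let φ : ZMod P ≃+* Π i : ι, ZMod (a i) :=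
    (ZMod.ringEquivCongr hprod.symm).trans (ZMod.prodEquivPi a hcop)
  have hφ : ∀ (z : ZMod P) (i : ι), φ z i = ((z.val : ℕ) : ZMod (a i)) := by
    intro z i
    have hdvd : a i ∣ P := Nat.dvd_of_mem_primeFactors i.2
    let f : ZMod P →+* ZMod (a i) :=
      (Pi.evalRingHom (fun j : ι => ZMod (a j)) i).comp (φ : ZMod P →+* Π i : ι, ZMod (a i))
    have hfg : f = ZMod.castHom hdvd (ZMod (a i)) := RingHom.ext_zmod _ _
    have h2 := DFunLike.congr_fun hfg z
    simp only [f, RingHom.comp_apply, Pi.evalRingHom_apply, RingEquiv.coe_toRingHom,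
      ZMod.castHom_apply] at h2
    rw [h2, ← ZMod.natCast_val]
  -- characterize units
  have hunit : ∀ z : ZMod P, IsUnit z ↔ ∀ i : ι, φ z i ≠ 0 := by
    intro z
    constructor
    · intro h i
      haveI : Fact (Nat.Prime (a i)) := ⟨hprime i⟩
      have : IsUnit (φ z i) := h.map ((Pi.evalRingHom (fun j : ι => ZMod (a j)) i).comp
        (φ : ZMod P →+* Π i : ι, ZMod (a i)))
      exact this.ne_zero
    · intro h
      have hu : ∀ i : ι, IsUnit (φ z i) := fun i => by
        haveI : Fact (Nat.Prime (a i)) := ⟨hprime i⟩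
        exact isUnit_iff_ne_zero.mpr (h i)
      have : IsUnit (φ z) := by
        refine IsUnit.of_mul_eq_one (a := φ z) (fun i => ((hu i).unit⁻¹ : (ZMod (a i))ˣ)) ?_
        funext i
        simp [IsUnit.mul_val_inv]
      simpa using this.map φ.symm
  classical
  set S : ∀ i : ι, Finset (ZMod (a i)) :=
    fun i => T.image (fun t : ZMod P => -((t.val : ℕ) : ZMod (a i))) with hS
  have hQ : ∀ x : ZMod P, (∀ t ∈ T, IsUnit (x + t)) ↔ ∀ i : ι, φ x i ∉ S i := by
    intro x
    constructor
    · intro h i hmem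
      rw [hS] at hmem
      simp only [Finset.mem_image] at hmem
      obtain ⟨t, ht, hval⟩ := hmem
      have := (hunit (x + t)).mp (h t ht) i
      rw [map_add] at this
      simp only [Pi.add_apply] at this
      rw [hφ t i] at this
      apply this
      rw [← hval]; ring
    · intro h t ht
      rw [hunit]
      intro i
      rw [map_add]
      simp only [Pi.add_apply]
      rw [hφ t i]
      intro hz
      apply h i
      rw [hS]
      simp only [Finset.mem_image]
      exact ⟨t, ht, by linear_combination -hz⟩
  have e1 : {x : ZMod P // ∀ t ∈ T, IsUnit (x + t)} ≃
      {y : Π i : ι, ZMod (a i) // ∀ i : ι, y i ∉ S i} :=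
    (Equiv.subtypeEquiv φ.toEquiv (fun x => by
      simpa using hQ x))
  have e2 : {y : Π i : ι, ZMod (a i) // ∀ i : ι, y i ∉ S i} ≃
      Π i : ι, {b : ZMod (a i) // b ∉ S i} :=
    Equiv.subtypePiEquivPi (p := fun (i : ι) (b : ZMod (a i)) => b ∉ S i)
  rw [Nat.card_congr (e1.trans e2), Nat.card_pi]
  rw [← Finset.prod_coe_sort (s := P.primeFactors)]
  apply Finset.prod_congr rfl
  intro i _
  haveI : NeZero (a i) := ⟨(hprime i).pos.ne'⟩
  rw [Nat.card_eq_fintype_card, Fintype.card_subtype_compl]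
  congr 1
  · exact ZMod.card (a i)
  · rw [Fintype.card_coe]
    have hcard : (S i).card = (T.image (fun t : ZMod P => ((t.val : ℕ) : ZMod (a i)))).card := by
      show (T.image (fun t : ZMod P => -((t.val : ℕ) : ZMod (a i)))).card = _
      have heq : (fun t : ZMod P => -((t.val : ℕ) : ZMod (a i))) =
          (fun b : ZMod (a i) => -b) ∘ (fun t : ZMod P => ((t.val : ℕ) : ZMod (a i))) := rfl
      rw [heq, ← Finset.image_image]
      exact Finset.card_image_of_injective _ neg_injective
    exact hcard
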